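/- For any r, s ∈ ℕ there exists q ∈ ℕ such that for every abelian group G, if A ⊆ G is IP*_r and B ⊆ G is IP*_s, then A ∩ B is IP*_q; that is, the intersection of an IP*_r set and an IP*_s set meets every IP_q set. -/

import Mathlib

open Set

/-- Finite sums set `FS(x₁,…,x_r)`. -/
def FSfin {G : Type*} [AddCommMonoid G] {r : ℕ} (x : Fin r → G) : Set G :=
  {g | ∃ α : Finset (Fin r), α.Nonempty ∧ ∑ i ∈ α, x i = g}

/-- `A` is an IP_r set: it contains `FS(x₁,…,x_r)` for some `x₁,…,x_r`. -/
def IsIPr {G : Type*} [AddCommMonoid G] (r : ℕ) (A : Set G) : Prop :=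
  ∃ x : Fin r → G, FSfin x ⊆ A

/-- `A` is an IP*_r set: it meets every IP_r set. -/
def IsIPrStar {G : Type*} [AddCommMonoid G] (r : ℕ) (A : Set G) : Prop :=
  ∀ B : Set G, IsIPr r B → (A ∩ B).Nonempty

namespace IPAux

/-- product of a fixed set with a sup of finsets -/
lemma sup_prod {K X Y : Type*} [DecidableEq Y] [DecidableEq (X × Y)]
    (β : Finset K) (Λ : Finset X) (F : K → Finset Y) :
    β.sup (fun k => Λ ×ˢ F k) = Λ ×ˢ β.sup F := by
  ext z
  simp only [Finset.mem_sup, Finset.mem_product]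
  tauto

lemma sup_image_comm {K Y Z : Type*} [DecidableEq Y] [DecidableEq Z]
    (β : Finset K) (F : K → Finset Y) (g : Y → Z) :
    β.sup (fun k => (F k).image g) = (β.sup F).image g := by
  ext z
  simp only [Finset.mem_sup, Finset.mem_image]
  tauto

lemma prod_union_right {X Y : Type*} [DecidableEq Y] [DecidableEq (X × Y)]
    (Λ : Finset X) (s t : Finset Y) :
    Λ ×ˢ (s ∪ t) = Λ ×ˢ s ∪ Λ ×ˢ t := by
  ext z
  simp only [Finset.mem_product, Finset.mem_union]
  tauto

/-- A family `D` is good for coloring `c` if the sets are nonempty, pairwise disjoint,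
and the color of a union depends only on the largest index involved. -/
def GoodFam {I : Type} [DecidableEq I] {m : ℕ} (c : Finset I → Bool)
    (D : Fin m → Finset I) : Prop :=
  (∀ j, (D j).Nonempty) ∧ (∀ j k, j ≠ k → Disjoint (D j) (D k)) ∧
  ∀ (j : Fin m) (β : Finset (Fin m)), (∀ k ∈ β, k < j) → c (D j ∪ β.sup D) = c (D j)

theorem exists_good (m : ℕ) : ∃ (I : Type) (_ : Fintype I) (_ : DecidableEq I),
    ∀ c : Finset I → Bool, ∃ D : Fin m → Finset I, GoodFam c D := by
  classical
  induction m with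
  | zero =>
    exact ⟨Unit, inferInstance, inferInstance, fun c =>
      ⟨Fin.elim0, fun j => j.elim0, fun j => j.elim0, fun j => j.elim0⟩⟩
  | succ m ih =>
    obtain ⟨I, hF, hD, hGood⟩ := ih
    obtain ⟨ι, ιF, hHJ⟩ :=
      Combinatorics.Line.exists_mono_in_high_dimension (Finset (Option I)) Bool
    letI iDE : DecidableEq (ι × Option I) := Classical.decEq _
    refine ⟨ι × Option I, inferInstance, iDE, ?_⟩
    intro c
    set wset : (ι → Finset (Option I)) → Finset (ι × Option I) :=
      fun w => Finset.univ.filter (fun z => z.2 ∈ w z.1) with hwset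
    obtain ⟨l, b, hl⟩ := hHJ (fun w => c (wset w))
    set Λ : Finset ι := Finset.univ.filter (fun p => l.idxFun p = none) with hΛdef
    have hΛ : Λ.Nonempty := by
      obtain ⟨i, hi⟩ := l.proper
      exact ⟨i, by simp [hΛdef, hi]⟩
    have hΛmem : ∀ p, p ∈ Λ ↔ l.idxFun p = none := by
      intro p; simp [hΛdef]
    set Bfix : Finset (ι × Option I) :=
      Finset.univ.filter (fun z => ∃ s, l.idxFun z.1 = some s ∧ z.2 ∈ s) with hBdef
    have key : ∀ γ : Finset (Option I), wset (l γ) = Bfix ∪ Λ ×ˢ γ := by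
      intro γ
      ext z
      simp only [hwset, Finset.mem_filter]
      simp only [hwset, hBdef, Finset.mem_filter, Finset.mem_univ, true_and,
        Finset.mem_union, Finset.mem_product, Combinatorics.Line.coe_apply, hΛmem]
      cases h : l.idxFun z.1 <;> simp [h]
    set c' : Finset I → Bool := fun T => c (Λ ×ˢ T.image some) with hc'
    obtain ⟨E, hEne, hEdisj, hEmono⟩ := hGood c'
    set Dtop : Finset (ι × Option I) := Bfix ∪ Λ ×ˢ {none} with hDtopdef
    set D : Fin (m+1) → Finset (ι × Option I) :=
      Fin.snoc (fun j => Λ ×ˢ (E j).image some) Dtop with hDdef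
    have hDcast : ∀ j : Fin m, D j.castSucc = Λ ×ˢ (E j).image some := by
      intro j; simp [hDdef]
    have hDlast : D (Fin.last m) = Dtop := by simp [hDdef]
    -- nonemptiness
    have hne : ∀ j, (D j).Nonempty := by
      intro j
      induction j using Fin.lastCases with
      | last =>
        obtain ⟨p, hp⟩ := hΛ
        exact ⟨(p, none), by rw [hDlast, hDtopdef]; simp [Finset.mem_union, hp]⟩
      | cast j =>
        rw [hDcast]
        exact hΛ.product ((hEne j).image some)
    -- disjointness
    have hdtop : ∀ j : Fin m, Disjoint Dtop (Λ ×ˢ (E j).image some) := by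
      intro j
      rw [Finset.disjoint_left]
      rintro ⟨p, a⟩ hz hz2
      rw [Finset.mem_product] at hz2
      obtain ⟨hp, ha⟩ := hz2
      rw [hΛmem] at hp
      simp only [Finset.mem_image] at ha
      obtain ⟨i, _, rfl⟩ := ha
      rw [hDtopdef, Finset.mem_union] at hz
      rcases hz with hz | hz
      · rw [hBdef] at hz
        simp only [Finset.mem_filter] at hz
        obtain ⟨_, s, hs, _⟩ := hz
        rw [hp] at hs; exact nomatch hs
      · rw [Finset.mem_product] at hz
        simp at hz
    have hdcc : ∀ j k : Fin m, j ≠ k →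
        Disjoint (Λ ×ˢ (E j).image some) (Λ ×ˢ (E k).image some) := by
      intro j k hjk
      rw [Finset.disjoint_left]
      rintro ⟨p, a⟩ hz hz2
      rw [Finset.mem_product] at hz hz2
      simp only [Finset.mem_image] at hz hz2
      obtain ⟨_, i, hi, rfl⟩ := hz
      obtain ⟨_, i', hi', he⟩ := hz2
      obtain rfl : i' = i := Option.some_injective _ he
      exact (Finset.disjoint_left.1 (hEdisj j k hjk)) hi hi'
    have hdisj : ∀ j k, j ≠ k → Disjoint (D j) (D k) := by
      intro j k hjk
      induction j using Fin.lastCases with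
      | last =>
        induction k using Fin.lastCases with
        | last => exact absurd rfl hjk
        | cast k => rw [hDlast, hDcast]; exact hdtop k
      | cast j =>
        induction k using Fin.lastCases with
        | last => rw [hDlast, hDcast]; exact (hdtop j).symm
        | cast k =>
          rw [hDcast, hDcast]
          exact hdcc j k (fun h => hjk (by rw [h]))
    -- conversion of index sets
    have hconv : ∀ β : Finset (Fin (m+1)), (∀ k ∈ β, k ≠ Fin.last m) →
        ∃ β₀ : Finset (Fin m), β = β₀.image Fin.castSucc ∧
          (∀ j : Fin m, j ∈ β₀ ↔ j.castSucc ∈ β) := by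
      intro β hβ
      refine ⟨Finset.univ.filter (fun j : Fin m => j.castSucc ∈ β), ?_, ?_⟩
      · ext k
        simp only [Finset.mem_image, Finset.mem_filter, Finset.mem_univ, true_and]
        constructor
        · intro hk
          obtain ⟨j, rfl⟩ := Fin.exists_castSucc_eq.2 (hβ k hk)
          exact ⟨j, hk, rfl⟩
        · rintro ⟨j, hj, rfl⟩; exact hj
      · intro j; simp
    have hsup : ∀ β₀ : Finset (Fin m),
        (β₀.image Fin.castSucc).sup D = Λ ×ˢ (β₀.sup E).image some := by
      intro β₀
      rw [Finset.sup_image]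
      have : β₀.sup (D ∘ Fin.castSucc) = β₀.sup (fun j => Λ ×ˢ (E j).image some) :=
        Finset.sup_congr rfl (fun j _ => hDcast j)
      rw [this, sup_prod, sup_image_comm]
    refine ⟨D, hne, hdisj, ?_⟩
    intro j β hβ
    induction j using Fin.lastCases with
    | last =>
      obtain ⟨β₀, rfl, -⟩ := hconv β (fun k hk => Fin.ne_last_of_lt (hβ k hk))
      rw [hsup β₀, hDlast, hDtopdef]
      have e1 : (Bfix ∪ Λ ×ˢ ({none} : Finset (Option I))) ∪ Λ ×ˢ (β₀.sup E).image some
          = wset (l (insert none ((β₀.sup E).image some))) := by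
        rw [key, Finset.insert_eq, prod_union_right, Finset.union_assoc]
      have e2 : Bfix ∪ Λ ×ˢ ({none} : Finset (Option I)) = wset (l {none}) := by
        rw [key]
      rw [e1, e2]
      exact (hl _).trans (hl _).symm
    | cast j =>
      have hne' : ∀ k ∈ β, k ≠ Fin.last m := by
        intro k hk
        exact Fin.ne_last_of_lt (lt_of_lt_of_le (hβ k hk) (Fin.le_last _))
      obtain ⟨β₀, rfl, hmem⟩ := hconv β hne'
      have hβ₀ : ∀ k ∈ β₀, k < j := by
        intro k hk
        have := hβ k.castSucc ((hmem k).1 hk)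
        exact Fin.castSucc_lt_castSucc_iff.1 this
      rw [hsup β₀, hDcast, ← prod_union_right, ← Finset.image_union]
      have := hEmono j β₀ hβ₀
      rw [hc'] at this
      exact this


/-- Finite unions theorem: a finite Folkman-type theorem for unions. -/
theorem finFU (m : ℕ) : ∃ q : ℕ, ∀ c : Finset (Fin q) → Bool,
    ∃ (D : Fin m → Finset (Fin q)) (b : Bool),
      (∀ j, (D j).Nonempty) ∧ (∀ j k, j ≠ k → Disjoint (D j) (D k)) ∧
      ∀ β : Finset (Fin m), β.Nonempty → c (β.sup D) = b := by
  classical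
  obtain ⟨I, hF, hDE, hGood⟩ := exists_good (2 * m + 1)
  refine ⟨Fintype.card I, ?_⟩
  intro c
  set e : I ≃ Fin (Fintype.card I) := Fintype.equivFin I with he
  obtain ⟨D₀, hne₀, hdisj₀, hmono₀⟩ := hGood (fun S => c (S.image e))
  obtain ⟨b, hb⟩ : ∃ b : Bool,
      m ≤ (Finset.univ.filter (fun j : Fin (2*m+1) => c ((D₀ j).image e) = b)).card := by
    set S := Finset.univ.filter (fun j : Fin (2*m+1) => c ((D₀ j).image e) = true) with hS
    by_cases hm : m ≤ S.card
    · exact ⟨true, hm⟩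
    · refine ⟨false, ?_⟩
      have hcc : (Finset.univ.filter
          (fun j : Fin (2*m+1) => c ((D₀ j).image e) = false)) = Sᶜ := by
        ext j; simp [hS, Finset.mem_compl]
      rw [hcc, Finset.card_compl]
      simp only [Fintype.card_fin]
      omega
  obtain ⟨T, hTsub, hTcard⟩ := Finset.exists_subset_card_eq hb
  set f : Fin m → Fin (2*m+1) := fun j => (T.orderIsoOfFin hTcard j : Fin (2*m+1)) with hf
  have hfinj : Function.Injective f := fun a b' hab =>
    (T.orderIsoOfFin hTcard).injective (Subtype.ext hab)
  have hfT : ∀ j, f j ∈ T := fun j => (T.orderIsoOfFin hTcard j).2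
  refine ⟨fun j => (D₀ (f j)).image e, b, ?_, ?_, ?_⟩
  · intro j; exact (hne₀ _).image e
  · intro j k hjk
    have hd := hdisj₀ (f j) (f k) (fun h => hjk (hfinj h))
    rw [Finset.disjoint_left] at hd ⊢
    intro a ha ha'
    simp only [Finset.mem_image] at ha ha'
    obtain ⟨u, hu, rfl⟩ := ha
    obtain ⟨v, hv, hev⟩ := ha'
    obtain rfl : v = u := e.injective hev
    exact hd hu hv
  · intro β hβne
    have h1 : β.sup (fun j => (D₀ (f j)).image e) = ((β.image f).sup D₀).image e := by
      rw [Finset.sup_image]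
      exact sup_image_comm β (fun j => D₀ (f j)) e
    rw [h1]
    set B₁ := β.image f with hB₁
    have hB₁ne : B₁.Nonempty := hβne.image f
    set jm := B₁.max' hB₁ne with hjm
    have hjmem : jm ∈ B₁ := B₁.max'_mem hB₁ne
    have hsplit : B₁.sup D₀ = D₀ jm ∪ (B₁.erase jm).sup D₀ := by
      conv_lhs => rw [← Finset.insert_erase hjmem]
      rw [Finset.sup_insert, Finset.sup_eq_union]
    rw [hsplit]
    have hlt : ∀ k ∈ B₁.erase jm, k < jm := fun k hk =>
      lt_of_le_of_ne (B₁.le_max' k (Finset.mem_of_mem_erase hk)) (Finset.ne_of_mem_erase hk)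
    have step := hmono₀ jm (B₁.erase jm) hlt
    have hjmT : jm ∈ T := by
      obtain ⟨j, hj, hje⟩ := Finset.mem_image.1 hjmem
      rw [← hje]; exact hfT j
    have hcol : c ((D₀ jm).image e) = b := (Finset.mem_filter.1 (hTsub hjmT)).2
    exact step.trans hcol

end IPAux

theorem iprstar_inter_ipsstar (r s : ℕ) :
    ∃ q : ℕ, ∀ (G : Type*) [AddCommGroup G] (A B : Set G),
      IsIPrStar r A → IsIPrStar s B → IsIPrStar q (A ∩ B) := by
  classical
  obtain ⟨q, hq⟩ := IPAux.finFU (max r s + 1)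
  refine ⟨q, ?_⟩
  intro G _ A B hA hB C hC
  obtain ⟨x, hx⟩ := hC
  obtain ⟨D, b, hne, hdisj, hmono⟩ := hq (fun α => decide (∑ i ∈ α, x i ∈ A))
  set y : Fin (max r s + 1) → G := fun j => ∑ i ∈ D j, x i with hy
  have hsum : ∀ β : Finset (Fin (max r s + 1)), ∑ j ∈ β, y j = ∑ i ∈ β.sup D, x i := by
    intro β
    have hdj : (↑β : Set (Fin (max r s + 1))).PairwiseDisjoint D := fun u _ v _ huv => hdisj u v huv
    rw [Finset.sup_eq_biUnion, Finset.sum_biUnion hdj]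
  have hsupne : ∀ β : Finset (Fin (max r s + 1)), β.Nonempty → (β.sup D).Nonempty := by
    rintro β ⟨j, hj⟩
    exact (hne j).mono (Finset.le_sup hj)
  have hyFS : ∀ g ∈ FSfin y, g ∈ FSfin x ∧ (decide (g ∈ A) = b) := by
    rintro g ⟨β, hβne, rfl⟩
    rw [hsum β]
    exact ⟨⟨β.sup D, hsupne β hβne, rfl⟩, hmono β hβne⟩
  have hrestrict : ∀ (k : ℕ) (hk : k ≤ max r s + 1),
      FSfin (fun j : Fin k => y (Fin.castLE hk j)) ⊆ FSfin y := by
    rintro k hk g ⟨α, hαne, rfl⟩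
    refine ⟨α.image (Fin.castLE hk), hαne.image _, ?_⟩
    rw [Finset.sum_image (fun a _ b' _ h => Fin.castLE_injective hk h)]
  cases b with
  | false =>
    exfalso
    have hrm : r ≤ max r s + 1 := (le_max_left r s).trans (Nat.le_succ _)
    have hsub : FSfin (fun j : Fin r => y (Fin.castLE hrm j)) ⊆ Aᶜ := by
      intro g hg
      have h2 := (hyFS g (hrestrict r hrm hg)).2
      simpa using h2
    obtain ⟨g, hg1, hg2⟩ := hA _ ⟨_, hsub⟩
    exact hg2 hg1
  | true =>
    have hsm : s ≤ max r s + 1 := (le_max_right r s).trans (Nat.le_succ _)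
    obtain ⟨g, hgB, hgFS⟩ :=
      hB (FSfin (fun j : Fin s => y (Fin.castLE hsm j))) ⟨_, subset_rfl⟩
    have h2 := hyFS g (hrestrict s hsm hgFS)
    have hgA : g ∈ A := by simpa using h2.2
    exact ⟨g, ⟨⟨hgA, hgB⟩, hx h2.1⟩⟩
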